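/- Explicit sub- and supersolutions near the terminal time (the 'direct computation' in the proof of Corollary 3.2): let M > 0 satisfy M ≥ sup_{y∈ℝ^d} |(Lη)(y)| and set δ = min{κ₀/M, T}. Then for all (t,y) ∈ [T−δ, T)×ℝ^d: (a) the function w⁻(t,y) = e^{−θ(T−t)} (T−t)^{−1/β} (η(y) − M(T−t)) is nonnegative and satisfies w⁻_t + Lw⁻ + F(y, w⁻) ≥ 0; (b) the function w⁺(t,y) = (T−t)^{−1/β} (η(y) + (M/2)(T−t)) + (T−t)·sup_{z∈ℝ^d} λ(z) is nonnegative and satisfies w⁺_t + Lw⁺ + F(y, w⁺) ≤ 0. -/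

import Mathlib

open scoped BigOperators NNReal

noncomputable section

/-- `ℝ^d` as Euclidean space. -/
abbrev Euc (d : ℕ) : Type := EuclideanSpace ℝ (Fin d)

/-- Partial derivative in the time variable, taken within the time set `s`. -/
noncomputable def partialT {d : ℕ} (s : Set ℝ) (w : ℝ → Euc d → ℝ) (t : ℝ) (y : Euc d) : ℝ :=
  derivWithin (fun r => w r y) s t

/-- `i`-th partial derivative in the space variable. -/
noncomputable def gradY {d : ℕ} (w : ℝ → Euc d → ℝ) (t : ℝ) (y : Euc d) (i : Fin d) : ℝ :=
  fderiv ℝ (w t) y (EuclideanSpace.single i 1)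

/-- `(i,j)` entry of the Hessian in the space variable. -/
noncomputable def hessY {d : ℕ} (w : ℝ → Euc d → ℝ) (t : ℝ) (y : Euc d) (i j : Fin d) : ℝ :=
  fderiv ℝ (fun z => fderiv ℝ (w t) z (EuclideanSpace.single j 1)) y (EuclideanSpace.single i 1)

/-- The operator `L w = ½ tr(σσᵀ D²_y w) + ⟨b, D_y w⟩`. -/
noncomputable def Lop {d n : ℕ} (b : Euc d → Euc d) (σ : Euc d → Matrix (Fin d) (Fin n) ℝ)
    (w : ℝ → Euc d → ℝ) (t : ℝ) (y : Euc d) : ℝ :=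
  (1 / 2) * ∑ i, ∑ j, (∑ k, σ y i k * σ y j k) * hessY w t y i j
    + ∑ i, b y i * gradY w t y i

/-- The nonlinearity `F(y,v) = λ(y) − v^{β+1}/(β η(y)^β) + θγ(y)v/(γ(y)^β+v^β)^{1/β} − θv`
with `β = 1/(p−1)` (so `1/β = p−1`); by Lean's conventions the third term is `0` when
`γ(y) = v = 0`. -/
noncomputable def hjbF {d : ℕ} (p θ : ℝ) (η lam gam : Euc d → ℝ) (y : Euc d) (v : ℝ) : ℝ :=
  lam y - v ^ (1 / (p - 1) + 1) / ((1 / (p - 1)) * η y ^ (1 / (p - 1)))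
    + θ * gam y * v / ((gam y ^ (1 / (p - 1)) + v ^ (1 / (p - 1))) ^ (p - 1))
    - θ * v

/-- `w` is `C^{1,2}` on `s × ℝ^d`: differentiable in time (within `s`), twice continuously
differentiable in space, with `w`, `∂_t w` and the spatial derivatives jointly continuous. -/
def IsC12On {d : ℕ} (s : Set ℝ) (w : ℝ → Euc d → ℝ) : Prop :=
  (∀ t ∈ s, ∀ y, DifferentiableWithinAt ℝ (fun r => w r y) s t) ∧
  (∀ t ∈ s, ContDiff ℝ 2 (w t)) ∧
  ContinuousOn (fun q : ℝ × Euc d => w q.1 q.2) (s ×ˢ Set.univ) ∧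
  ContinuousOn (fun q : ℝ × Euc d => partialT s w q.1 q.2) (s ×ˢ Set.univ) ∧
  ContinuousOn (fun q : ℝ × Euc d => fderiv ℝ (fun z => fderiv ℝ (w q.1) z) q.2) (s ×ˢ Set.univ)

/-- `w(t,y) → +∞` as `t → T`, locally uniformly in `y`, with `t` ranging in `[a,T)`. -/
def BlowsUpLocUnif {d : ℕ} (a T : ℝ) (w : ℝ → Euc d → ℝ) : Prop :=
  ∀ K : Set (Euc d), IsCompact K → ∀ M : ℝ,
    ∃ t₀, a ≤ t₀ ∧ t₀ < T ∧ ∀ t, t₀ ≤ t → t < T → ∀ y ∈ K, M ≤ w t y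

/-- Polynomial growth on `[a,T) × ℝ^d`: for each `s < T` a bound `C(1+‖y‖^q)` on `[a,s]`. -/
def PolyGrowthOn {d : ℕ} (a T : ℝ) (w : ℝ → Euc d → ℝ) : Prop :=
  ∀ s, a ≤ s → s < T → ∃ C > 0, ∃ q > 0,
    ∀ t, a ≤ t → t ≤ s → ∀ y : Euc d, |w t y| ≤ C * (1 + ‖y‖ ^ q)

/-- The explicit subsolution `w⁻(t,y) = e^{−θ(T−t)} (T−t)^{−1/β} (η(y) − M(T−t))`,
with `−1/β = −(p−1)`. -/
noncomputable def wMinus {d : ℕ} (T p θ M : ℝ) (η : Euc d → ℝ) (t : ℝ) (y : Euc d) : ℝ :=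
  Real.exp (-(θ * (T - t))) * (T - t) ^ (-(p - 1)) * (η y - M * (T - t))

/-- The explicit supersolution `w⁺(t,y) = (T−t)^{−1/β} (η(y) + (M/2)(T−t)) + (T−t) S`,
where `S = sup_z λ(z)`. -/
noncomputable def wPlus {d : ℕ} (T p M S : ℝ) (η : Euc d → ℝ) (t : ℝ) (y : Euc d) : ℝ :=
  (T - t) ^ (-(p - 1)) * (η y + (M / 2) * (T - t)) + (T - t) * S

section Helpers

variable {d n : ℕ}

lemma lop_affine (b : Euc d → Euc d) (σ : Euc d → Matrix (Fin d) (Fin n) ℝ)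
    (η : Euc d → ℝ) (hη : ContDiff ℝ 2 η) (w : ℝ → Euc d → ℝ) (t : ℝ) (c k : ℝ)
    (hw : w t = fun y => c * η y + k) (y : Euc d) :
    Lop b σ w t y = c * Lop b σ (fun _ => η) 0 y := by
  have hηd : Differentiable ℝ η := hη.differentiable (by norm_num)
  have hfd : ContDiff ℝ 1 (fderiv ℝ η) := hη.fderiv_right (by norm_num)
  have hfd' : Differentiable ℝ (fderiv ℝ η) := hfd.differentiable (by norm_num)
  have hgrad : ∀ z : Euc d, fderiv ℝ (w t) z = c • fderiv ℝ η z := by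
    intro z
    rw [hw, fderiv_add_const, fderiv_const_mul (hηd z)]
  have hG : ∀ i, gradY w t y i = c * gradY (fun _ => η) 0 y i := by
    intro i; simp [gradY, hgrad y]
  have hH : ∀ i j, hessY w t y i j = c * hessY (fun _ => η) 0 y i j := by
    intro i j
    have h1 : (fun z => fderiv ℝ (w t) z (EuclideanSpace.single j 1))
        = fun z => c * fderiv ℝ η z (EuclideanSpace.single j 1) := by
      funext z; rw [hgrad z]; simp
    have hdiff : DifferentiableAt ℝ (fun z => fderiv ℝ η z (EuclideanSpace.single j 1)) y :=
      (hfd'.clm_apply (differentiable_const _)) y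
    simp only [hessY, h1]
    rw [fderiv_const_mul hdiff]
    simp [hessY]
  have e1 : ∑ i, b y i * gradY w t y i = c * ∑ i, b y i * gradY (fun _ => η) 0 y i := by
    rw [Finset.mul_sum]; exact Finset.sum_congr rfl fun i _ => by rw [hG i]; ring
  have e2 : ∑ i, ∑ j, (∑ k, σ y i k * σ y j k) * hessY w t y i j
      = c * ∑ i, ∑ j, (∑ k, σ y i k * σ y j k) * hessY (fun _ => η) 0 y i j := by
    rw [Finset.mul_sum]
    refine Finset.sum_congr rfl fun i _ => ?_
    rw [Finset.mul_sum]
    exact Finset.sum_congr rfl fun j _ => by rw [hH i j]; ring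
  simp only [Lop]
  rw [e1, e2]; ring

lemma hasDerivAt_wMinus (T p θ M : ℝ) (η : Euc d → ℝ) (y : Euc d) (t : ℝ) (ht : t < T) :
    HasDerivAt (fun r => wMinus T p θ M η r y)
      (θ * (Real.exp (-(θ * (T - t))) * (T - t) ^ (-(p - 1)) * (η y - M * (T - t)))
        + Real.exp (-(θ * (T - t))) * ((p - 1) * (T - t) ^ (-p)) * (η y - M * (T - t))
        + Real.exp (-(θ * (T - t))) * (T - t) ^ (-(p - 1)) * M) t := by
  have hτ : (0:ℝ) < T - t := sub_pos.2 ht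
  have hs : HasDerivAt (fun r : ℝ => T - r) (-1) t := (hasDerivAt_id t).const_sub T
  have hin : HasDerivAt (fun r : ℝ => -(θ * (T - r))) θ t := by
    have := (hs.const_mul θ).neg
    exact this.congr_deriv (by ring)
  have hexp : HasDerivAt (fun r : ℝ => Real.exp (-(θ * (T - r))))
      (Real.exp (-(θ * (T - t))) * θ) t := hin.exp
  have hrpow : HasDerivAt (fun r : ℝ => (T - r) ^ (-(p - 1)))
      ((p - 1) * (T - t) ^ (-p)) t := by
    have h := hs.rpow_const (p := -(p - 1)) (Or.inl hτ.ne')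
    convert h using 1
    rw [show -(p - 1) - 1 = -p by ring]
    ring
  have hlin : HasDerivAt (fun r : ℝ => η y - M * (T - r)) M t := by
    have := (hs.const_mul M).const_sub (η y)
    exact this.congr_deriv (by ring)
  have h := (hexp.mul hrpow).mul hlin
  simp only [wMinus]
  exact h.congr_deriv (by simp only [Pi.mul_apply]; ring)

lemma hasDerivAt_wPlus (T p M S : ℝ) (η : Euc d → ℝ) (y : Euc d) (t : ℝ) (ht : t < T) :
    HasDerivAt (fun r => wPlus T p M S η r y)
      ((p - 1) * (T - t) ^ (-p) * (η y + M / 2 * (T - t))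
        - (T - t) ^ (-(p - 1)) * (M / 2) - S) t := by
  have hτ : (0:ℝ) < T - t := sub_pos.2 ht
  have hs : HasDerivAt (fun r : ℝ => T - r) (-1) t := (hasDerivAt_id t).const_sub T
  have hrpow : HasDerivAt (fun r : ℝ => (T - r) ^ (-(p - 1)))
      ((p - 1) * (T - t) ^ (-p)) t := by
    have h := hs.rpow_const (p := -(p - 1)) (Or.inl hτ.ne')
    convert h using 1
    rw [show -(p - 1) - 1 = -p by ring]
    ring
  have hlin : HasDerivAt (fun r : ℝ => η y + M / 2 * (T - r)) (-(M / 2)) t := by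
    have := (hs.const_mul (M / 2)).const_add (η y)
    exact this.congr_deriv (by ring)
  have hS : HasDerivAt (fun r : ℝ => (T - r) * S) (-S) t := by
    have := hs.mul_const S
    exact this.congr_deriv (by ring)
  have h := (hrpow.mul hlin).add hS
  simp only [wPlus]
  exact h.congr_deriv (by ring)

lemma hjbF_lower (p θ : ℝ) (hp : 1 < p) (hθ : 0 ≤ θ) (η lam gam : Euc d → ℝ)
    (y : Euc d) (hlam0 : 0 ≤ lam y) (hgam0 : 0 ≤ gam y) (hη : 0 < η y)
    (τ : ℝ) (hτ : 0 < τ) (v : ℝ) (hv0 : 0 ≤ v) (hvle : v ≤ τ ^ (-(p - 1)) * η y) :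
    -((p - 1) / τ * v) - θ * v ≤ hjbF p θ η lam gam y v := by
  have hp1 : (0:ℝ) < p - 1 := sub_pos.2 hp
  simp only [hjbF]
  set β := 1 / (p - 1) with hβdef
  have hβ : 0 < β := by positivity
  have hηβ : 0 < η y ^ β := Real.rpow_pos_of_pos hη β
  have hthird : 0 ≤ θ * gam y * v / ((gam y ^ β + v ^ β) ^ (p - 1)) := by positivity
  have hkey : v ^ (β + 1) / (β * η y ^ β) ≤ (p - 1) / τ * v := by
    rcases eq_or_lt_of_le hv0 with h0 | hv
    · rw [← h0, Real.zero_rpow (by positivity), zero_div]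
      positivity
    · have h1 : v ^ (β + 1) = v ^ β * v := by
        rw [Real.rpow_add hv, Real.rpow_one]
      have h2 : v ^ β ≤ (τ ^ (-(p - 1)) * η y) ^ β :=
        Real.rpow_le_rpow hv0 hvle hβ.le
      have h3 : (τ ^ (-(p - 1)) * η y) ^ β = τ⁻¹ * η y ^ β := by
        rw [Real.mul_rpow (by positivity) hη.le, ← Real.rpow_mul hτ.le]
        rw [show -(p - 1) * β = -1 by rw [hβdef]; field_simp, Real.rpow_neg_one]
      have h4 : v ^ (β + 1) ≤ τ⁻¹ * η y ^ β * v := by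
        rw [h1]
        apply mul_le_mul_of_nonneg_right _ hv0
        rw [← h3]; exact h2
      calc v ^ (β + 1) / (β * η y ^ β) ≤ (τ⁻¹ * η y ^ β * v) / (β * η y ^ β) := by
            apply div_le_div_of_nonneg_right h4 ?_ <;> positivity
        _ = (p - 1) / τ * v := by
            rw [hβdef]; field_simp
  linarith

lemma hjbF_upper (p θ : ℝ) (hp : 1 < p) (hθ : 0 ≤ θ) (η lam gam : Euc d → ℝ)
    (y : Euc d) (hgam0 : 0 ≤ gam y) (hη : 0 < η y) (S : ℝ) (hlamS : lam y ≤ S)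
    (v : ℝ) (hv0 : 0 ≤ v) :
    hjbF p θ η lam gam y v
      ≤ S - v ^ (1 / (p - 1) + 1) / ((1 / (p - 1)) * η y ^ (1 / (p - 1))) := by
  have hp1 : (0:ℝ) < p - 1 := sub_pos.2 hp
  simp only [hjbF]
  set β := 1 / (p - 1) with hβdef
  have hβ : 0 < β := by positivity
  have hthird : θ * gam y * v / ((gam y ^ β + v ^ β) ^ (p - 1)) ≤ θ * v := by
    rcases eq_or_lt_of_le hgam0 with h0 | hg
    · rw [← h0]
      simp only [mul_zero, zero_mul, zero_div]
      positivity
    · have hγβ : gam y ^ β ≤ gam y ^ β + v ^ β :=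
        le_add_of_nonneg_right (Real.rpow_nonneg hv0 β)
      have h1 : gam y ≤ (gam y ^ β + v ^ β) ^ (p - 1) := by
        calc gam y = (gam y ^ β) ^ (p - 1) := by
              rw [← Real.rpow_mul hgam0]
              rw [show β * (p - 1) = 1 by rw [hβdef]; field_simp, Real.rpow_one]
          _ ≤ (gam y ^ β + v ^ β) ^ (p - 1) :=
              Real.rpow_le_rpow (Real.rpow_nonneg hgam0 β) hγβ (by linarith)
      calc θ * gam y * v / ((gam y ^ β + v ^ β) ^ (p - 1)) ≤ θ * gam y * v / gam y :=
            div_le_div_of_nonneg_left (by positivity) hg h1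
        _ = θ * v := by field_simp
  linarith

end Helpers

set_option maxHeartbeats 1000000 in
/-- the 'direct computation' in the proof of Corollary 3.2: with
`M ≥ sup_y |(Lη)(y)|` and `δ = min{κ₀/M, T}`, on `[T−δ,T) × ℝ^d` the function `w⁻` is a
nonnegative subsolution and `w⁺` is a nonnegative supersolution of the HJB PDE. -/
theorem explicit_sub_and_supersolutions
    (d n : ℕ) (hd : 1 ≤ d) (hn : 1 ≤ n)
    (T p θ κ₀ : ℝ) (hT : 0 < T) (hp : 1 < p) (hθ : 0 ≤ θ) (hκ₀ : 0 < κ₀)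
    (b : Euc d → Euc d) (σ : Euc d → Matrix (Fin d) (Fin n) ℝ)
    (hbLip : ∃ K : ℝ≥0, LipschitzWith K b) (hbBdd : ∃ C, ∀ y, ‖b y‖ ≤ C)
    (hσLip : ∃ K, ∀ y y' : Euc d, ∀ i k, |σ y i k - σ y' i k| ≤ K * ‖y - y'‖)
    (hσBdd : ∃ C, ∀ y i k, |σ y i k| ≤ C)
    (hell : ∃ ν > 0, ∀ (y : Euc d) (z : Fin d → ℝ),
      ν * ∑ i, z i ^ 2 ≤ ∑ i, ∑ j, (∑ k, σ y i k * σ y j k) * z j * z i)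
    (η lam gam : Euc d → ℝ)
    (hηC2 : ContDiff ℝ 2 η)
    (hηBdd : ∃ C, ∀ y, |η y| ≤ C ∧ ‖fderiv ℝ η y‖ ≤ C ∧ ‖fderiv ℝ (fderiv ℝ η) y‖ ≤ C)
    (hηκ : ∀ y, κ₀ ≤ η y)
    (hlamCont : Continuous lam) (hlam0 : ∀ y, 0 ≤ lam y) (hlamBdd : ∃ C, ∀ y, lam y ≤ C)
    (hgamCont : Continuous gam) (hgam0 : ∀ y, 0 ≤ gam y) (hgamBdd : ∃ C, ∀ y, gam y ≤ C)
    (M : ℝ) (hM : 0 < M)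
    (hMge : ∀ y, |Lop b σ (fun _ => η) 0 y| ≤ M) :
    (∀ t, T - min (κ₀ / M) T ≤ t → t < T → ∀ y,
      0 ≤ wMinus T p θ M η t y) ∧
    (∀ t, T - min (κ₀ / M) T ≤ t → t < T → ∀ y,
      0 ≤ partialT (Set.Ico (T - min (κ₀ / M) T) T) (wMinus T p θ M η) t y
        + Lop b σ (wMinus T p θ M η) t y
        + hjbF p θ η lam gam y (wMinus T p θ M η t y)) ∧
    (∀ t, T - min (κ₀ / M) T ≤ t → t < T → ∀ y,
      0 ≤ wPlus T p M (⨆ z, lam z) η t y) ∧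
    (∀ t, T - min (κ₀ / M) T ≤ t → t < T → ∀ y,
      partialT (Set.Ico (T - min (κ₀ / M) T) T) (wPlus T p M (⨆ z, lam z) η) t y
        + Lop b σ (wPlus T p M (⨆ z, lam z) η) t y
        + hjbF p θ η lam gam y (wPlus T p M (⨆ z, lam z) η t y) ≤ 0) := by
  have hp1 : (0:ℝ) < p - 1 := sub_pos.2 hp
  have hne : p - 1 ≠ 0 := ne_of_gt hp1
  obtain ⟨Cl, hCl⟩ := hlamBdd
  have hbddlam : BddAbove (Set.range lam) := ⟨Cl, by rintro _ ⟨z, rfl⟩; exact hCl z⟩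
  set S := ⨆ z, lam z with hSdef
  clear_value S
  have hlamS : ∀ z, lam z ≤ S := by rw [hSdef]; exact fun z => le_ciSup hbddlam z
  have hS0 : 0 ≤ S := le_trans (hlam0 0) (hlamS 0)
  have common : ∀ t, T - min (κ₀ / M) T ≤ t → t < T →
      0 < T - t ∧ M * (T - t) ≤ κ₀ := by
    intro t ht1 ht2
    refine ⟨sub_pos.2 ht2, ?_⟩
    have h1 : T - t ≤ min (κ₀ / M) T := by linarith
    have h2 : T - t ≤ κ₀ / M := h1.trans (min_le_left _ _)
    calc M * (T - t) ≤ M * (κ₀ / M) := mul_le_mul_of_nonneg_left h2 hM.le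
      _ = κ₀ := by field_simp
  refine ⟨?_, ?_, ?_, ?_⟩
  · -- nonnegativity of wMinus
    intro t ht1 ht2 y
    obtain ⟨hτ0, hτκ⟩ := common t ht1 ht2
    have h1 : 0 ≤ η y - M * (T - t) := by linarith [hηκ y]
    simp only [wMinus]
    exact mul_nonneg (mul_nonneg (Real.exp_pos _).le (Real.rpow_nonneg hτ0.le _)) h1
  · -- subsolution inequality
    intro t ht1 ht2 y
    obtain ⟨hτ0, hτκ⟩ := common t ht1 ht2
    have hηy : 0 < η y := lt_of_lt_of_le hκ₀ (hηκ y)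
    set E := Real.exp (-(θ * (T - t))) with hEdef
    set R := (T - t) ^ (-(p - 1)) with hRdef
    clear_value E R
    have hE0 : 0 < E := by rw [hEdef]; exact Real.exp_pos _
    have hE1 : E ≤ 1 := by rw [hEdef]; exact Real.exp_le_one_iff.2 (by nlinarith [mul_nonneg hθ hτ0.le])
    have hR0 : 0 < R := by rw [hRdef]; exact Real.rpow_pos_of_pos hτ0 _
    have hLη := abs_le.1 (hMge y)
    have hsub : 0 ≤ η y - M * (T - t) := by linarith [hηκ y]
    have hv : wMinus T p θ M η t y = E * R * (η y - M * (T - t)) := by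
      simp only [wMinus, ← hEdef, ← hRdef]
    have hv0 : 0 ≤ wMinus T p θ M η t y := by
      rw [hv]; exact mul_nonneg (by positivity) hsub
    have hvle : wMinus T p θ M η t y ≤ R * η y := by
      rw [hv]
      calc E * R * (η y - M * (T - t)) ≤ 1 * R * η y := by
            apply mul_le_mul (mul_le_mul hE1 le_rfl hR0.le zero_le_one) (by nlinarith [mul_nonneg hM.le hτ0.le]) hsub
              (by positivity)
        _ = R * η y := by ring
    have hUD : UniqueDiffWithinAt ℝ (Set.Ico (T - min (κ₀ / M) T) T) t :=
      (uniqueDiffOn_Ico _ T) t ⟨ht1, ht2⟩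
    have hpt : partialT (Set.Ico (T - min (κ₀ / M) T) T) (wMinus T p θ M η) t y
        = θ * (E * R * (η y - M * (T - t)))
          + E * ((p - 1) * (T - t) ^ (-p)) * (η y - M * (T - t))
          + E * R * M := by
      simp only [partialT]
      rw [hEdef, hRdef]
      exact (hasDerivAt_wMinus T p θ M η y t ht2).hasDerivWithinAt.derivWithin hUD
    have hLop : Lop b σ (wMinus T p θ M η) t y = E * R * Lop b σ (fun _ => η) 0 y :=
      lop_affine b σ η hηC2 _ t (E * R) (E * R * (-(M * (T - t))))
        (funext fun z => by simp only [wMinus, ← hEdef, ← hRdef]; ring) y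
    have hF := hjbF_lower p θ hp hθ η lam gam y (hlam0 y) (hgam0 y) hηy
      (T - t) hτ0 (wMinus T p θ M η t y) hv0 (by rw [hRdef] at hvle; exact hvle)
    have hRp : (T - t) ^ (-p) = R * (T - t)⁻¹ := by
      rw [hRdef, show -p = -(p - 1) + -1 by ring, Real.rpow_add hτ0, Real.rpow_neg_one]
    have e1 : θ * (E * R * (η y - M * (T - t))) = θ * wMinus T p θ M η t y := by
      rw [hv]
    have e2 : E * ((p - 1) * (T - t) ^ (-p)) * (η y - M * (T - t))
        = (p - 1) / (T - t) * wMinus T p θ M η t y := by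
      rw [hRp, hv]; field_simp
    have e3 : 0 ≤ E * R * M + E * R * Lop b σ (fun _ => η) 0 y := by
      have h1 : 0 ≤ M + Lop b σ (fun _ => η) 0 y := by linarith [hLη.1]
      linarith [mul_nonneg (mul_nonneg hE0.le hR0.le) h1]
    rw [hpt, hLop]
    linarith [hF, e3]
  · -- nonnegativity of wPlus
    intro t ht1 ht2 y
    obtain ⟨hτ0, hτκ⟩ := common t ht1 ht2
    have hηy : 0 < η y := lt_of_lt_of_le hκ₀ (hηκ y)
    simp only [wPlus]
    have h1 : (0:ℝ) ≤ (T - t) ^ (-(p - 1)) := Real.rpow_nonneg hτ0.le _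
    have h2 : (0:ℝ) ≤ η y + M / 2 * (T - t) := by nlinarith
    exact add_nonneg (mul_nonneg h1 h2) (mul_nonneg hτ0.le hS0)
  · -- supersolution inequality
    intro t ht1 ht2 y
    obtain ⟨hτ0, hτκ⟩ := common t ht1 ht2
    have hηy : 0 < η y := lt_of_lt_of_le hκ₀ (hηκ y)
    set R := (T - t) ^ (-(p - 1)) with hRdef
    set P := (T - t) ^ (-p) with hPdef
    clear_value R P
    have hR0 : 0 < R := by rw [hRdef]; exact Real.rpow_pos_of_pos hτ0 _
    have hP0 : 0 < P := by rw [hPdef]; exact Real.rpow_pos_of_pos hτ0 _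
    have hLη := abs_le.1 (hMge y)
    have ha0 : 0 < η y + M / 2 * (T - t) := by nlinarith
    have hv : wPlus T p M S η t y = R * (η y + M / 2 * (T - t)) + (T - t) * S := by
      simp only [wPlus, ← hRdef]
    have hv0 : 0 ≤ wPlus T p M S η t y := by
      rw [hv]
      exact add_nonneg (mul_nonneg hR0.le ha0.le) (mul_nonneg hτ0.le hS0)
    have hUD : UniqueDiffWithinAt ℝ (Set.Ico (T - min (κ₀ / M) T) T) t :=
      (uniqueDiffOn_Ico _ T) t ⟨ht1, ht2⟩
    have hpt : partialT (Set.Ico (T - min (κ₀ / M) T) T) (wPlus T p M S η) t y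
        = (p - 1) * P * (η y + M / 2 * (T - t)) - R * (M / 2) - S := by
      simp only [partialT]
      rw [hRdef, hPdef]
      exact (hasDerivAt_wPlus T p M S η y t ht2).hasDerivWithinAt.derivWithin hUD
    have hLop : Lop b σ (wPlus T p M S η) t y = R * Lop b σ (fun _ => η) 0 y :=
      lop_affine b σ η hηC2 _ t R (R * (M / 2 * (T - t)) + (T - t) * S)
        (funext fun z => by simp only [wPlus, ← hRdef]; ring) y
    have hF := hjbF_upper p θ hp hθ η lam gam y (hgam0 y) hηy S (hlamS y)
      (wPlus T p M S η t y) hv0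
    have hβ1 : (1:ℝ) ≤ 1 / (p - 1) + 1 := by
      have h01 : (0:ℝ) < 1 / (p - 1) := by positivity
      linarith
    have hva : R * (η y + M / 2 * (T - t)) ≤ wPlus T p M S η t y := by
      rw [hv]; nlinarith [mul_nonneg hτ0.le hS0]
    have h1 : (R * (η y + M / 2 * (T - t))) ^ (1 / (p - 1) + 1)
        ≤ wPlus T p M S η t y ^ (1 / (p - 1) + 1) := by
      refine Real.rpow_le_rpow (mul_nonneg hR0.le ha0.le) hva (by linarith)
    have h2 : (R * (η y + M / 2 * (T - t))) ^ (1 / (p - 1) + 1)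
        = P * (η y + M / 2 * (T - t)) ^ (1 / (p - 1) + 1) := by
      rw [Real.mul_rpow hR0.le ha0.le]
      congr 1
      rw [hRdef, hPdef, ← Real.rpow_mul hτ0.le]
      congr 1
      field_simp; ring
    have hx0 : (0:ℝ) ≤ M / 2 * (T - t) / η y := by positivity
    have hax : η y + M / 2 * (T - t) = η y * (1 + M / 2 * (T - t) / η y) := by
      field_simp
    have hB : 1 + (1 / (p - 1) + 1) * (M / 2 * (T - t) / η y)
        ≤ (1 + M / 2 * (T - t) / η y) ^ (1 / (p - 1) + 1) :=
      one_add_mul_self_le_rpow_one_add (by linarith) hβ1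
    have h3 : η y ^ ((1:ℝ) / (p - 1) + 1) * (1 + (1 / (p - 1) + 1) * (M / 2 * (T - t) / η y))
        ≤ (η y + M / 2 * (T - t)) ^ (1 / (p - 1) + 1) := by
      rw [hax, Real.mul_rpow hηy.le (by linarith)]
      exact mul_le_mul_of_nonneg_left hB (Real.rpow_nonneg hηy.le _)
    have h4 : η y ^ ((1:ℝ) / (p - 1) + 1) = η y ^ ((1:ℝ) / (p - 1)) * η y := by
      rw [Real.rpow_add hηy, Real.rpow_one]
    have hRP : R = P * (T - t) := by
      rw [hRdef, hPdef, show -(p - 1) = -p + 1 by ring, Real.rpow_add hτ0, Real.rpow_one]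
    have hkey : (p - 1) * P * (η y + M / 2 * (T - t)) + R * (M / 2)
        ≤ wPlus T p M S η t y ^ (1 / (p - 1) + 1)
          / ((1 / (p - 1)) * η y ^ (1 / (p - 1))) := by
      rw [le_div_iff₀ (by positivity)]
      have hchain : P * (η y ^ ((1:ℝ) / (p - 1)) * η y
            * (1 + (1 / (p - 1) + 1) * (M / 2 * (T - t) / η y)))
          ≤ wPlus T p M S η t y ^ (1 / (p - 1) + 1) := by
        calc P * (η y ^ ((1:ℝ) / (p - 1)) * η y
              * (1 + (1 / (p - 1) + 1) * (M / 2 * (T - t) / η y)))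
            = P * (η y ^ ((1:ℝ) / (p - 1) + 1)
              * (1 + (1 / (p - 1) + 1) * (M / 2 * (T - t) / η y))) := by rw [h4]
          _ ≤ P * (η y + M / 2 * (T - t)) ^ (1 / (p - 1) + 1) := by
              exact mul_le_mul_of_nonneg_left h3 hP0.le
          _ = (R * (η y + M / 2 * (T - t))) ^ (1 / (p - 1) + 1) := h2.symm
          _ ≤ wPlus T p M S η t y ^ (1 / (p - 1) + 1) := h1
      refine le_trans (le_of_eq ?_) hchain
      rw [hRP]
      generalize η y ^ (1 / (p - 1)) = H
      field_simp
      ring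
    have hRM : R * Lop b σ (fun _ => η) 0 y ≤ R * M :=
      mul_le_mul_of_nonneg_left hLη.2 hR0.le
    rw [hpt, hLop]
    linarith [hF, hkey, hRM]
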